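/- For every pair of integers n, j with n ≥ 2 and 1 ≤ j ≤ n−1, the binomial coefficient satisfies (1/(2√n))·varphi(j/n)^n ≤ C(n,j) ≤ varphi(j/n)^n. -/

import Mathlib

noncomputable def varphi (x : ℝ) : ℝ := x ^ (-x) * (1 - x) ^ (-(1 - x))

open Real Filter

lemma varphi_pow (j k : ℕ) (hj : 1 ≤ j) (hk : 1 ≤ k) :
    varphi ((j : ℝ) / ((j : ℝ) + k)) ^ (j + k) =
      ((j : ℝ) + k) ^ (j + k) / ((j : ℝ) ^ j * (k : ℝ) ^ k) := by
  have ha : (0:ℝ) < j := by exact_mod_cast hj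
  have hb : (0:ℝ) < k := by exact_mod_cast hk
  have hs : (0:ℝ) < (j:ℝ) + k := by linarith
  set a := (j:ℝ)
  set b := (k:ℝ)
  have hx : (0:ℝ) < a / (a + b) := by positivity
  have h1x : 1 - a / (a + b) = b / (a + b) := by field_simp; ring
  have hy : (0:ℝ) < b / (a + b) := by positivity
  unfold varphi
  rw [h1x, mul_pow]
  have e1 : ((a / (a + b)) ^ (-(a / (a + b)))) ^ (j + k) = ((a / (a + b)) ^ j)⁻¹ := by
    rw [← Real.rpow_natCast ((a / (a + b)) ^ (-(a / (a + b)))) (j + k),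
      ← Real.rpow_mul hx.le]
    have : -(a / (a + b)) * ((j + k : ℕ) : ℝ) = -(j : ℝ) := by
      push_cast
      field_simp
      rw [show (j:ℝ) = a from rfl, show (k:ℝ) = b from rfl]; ring
    rw [this, Real.rpow_neg hx.le, Real.rpow_natCast]
  have e2 : ((b / (a + b)) ^ (-(b / (a + b)))) ^ (j + k) = ((b / (a + b)) ^ k)⁻¹ := by
    rw [← Real.rpow_natCast ((b / (a + b)) ^ (-(b / (a + b)))) (j + k),
      ← Real.rpow_mul hy.le]
    have : -(b / (a + b)) * ((j + k : ℕ) : ℝ) = -(k : ℝ) := by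
      push_cast
      field_simp
      rw [show (j:ℝ) = a from rfl, show (k:ℝ) = b from rfl]; ring
    rw [this, Real.rpow_neg hy.le, Real.rpow_natCast]
  rw [e1, e2, div_pow, div_pow]
  rw [pow_add]
  field_simp

lemma scalar_ineq (a b : ℝ) (ha : 0 < a) (hb : 0 < b) :
    (Real.exp 1 / Real.sqrt 2) ^ 2 * (Real.sqrt (2 * a) * Real.sqrt (2 * b)) ≤
      2 * Real.sqrt (a + b) * (Real.sqrt π * Real.sqrt (2 * (a + b))) := by
  have h2 : Real.sqrt 2 ^ 2 = 2 := Real.sq_sqrt (by norm_num)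
  have hE : (Real.exp 1 / Real.sqrt 2) ^ 2 = Real.exp 1 ^ 2 / 2 := by
    rw [div_pow, h2]
  have hab : Real.sqrt (2 * a) * Real.sqrt (2 * b) = Real.sqrt (4 * (a * b)) := by
    rw [← Real.sqrt_mul (by positivity)]
    ring_nf
  have hab2 : Real.sqrt (4 * (a * b)) ≤ a + b := by
    rw [show a + b = Real.sqrt ((a + b) ^ 2) from (Real.sqrt_sq (by positivity)).symm]
    apply Real.sqrt_le_sqrt
    nlinarith [sq_nonneg (a - b)]
  have hrhs : Real.sqrt (a + b) * Real.sqrt (2 * (a + b)) = Real.sqrt 2 * (a + b) := by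
    rw [← Real.sqrt_mul (by positivity), show (a+b) * (2*(a+b)) = 2 * (a+b)^2 by ring,
      Real.sqrt_mul (by norm_num), Real.sqrt_sq (by positivity)]
  have hexp : Real.exp 1 ≤ 2.7182818286 := Real.exp_one_lt_d9.le
  have hexp0 : (0:ℝ) < Real.exp 1 := Real.exp_pos 1
  have hs2 : (1.41:ℝ) ≤ Real.sqrt 2 := by
    nlinarith [Real.sqrt_nonneg 2]
  have hspi : (1.73:ℝ) ≤ Real.sqrt π := by
    have hpi : (3:ℝ) ≤ π := Real.pi_gt_three.le
    have := Real.sq_sqrt (by linarith : (0:ℝ) ≤ π)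
    nlinarith [Real.sqrt_nonneg π]
  have hkey : Real.exp 1 ^ 2 / 2 ≤ 2 * (Real.sqrt π * Real.sqrt 2) := by
    nlinarith [sq_nonneg (a - b)]
  calc (Real.exp 1 / Real.sqrt 2) ^ 2 * (Real.sqrt (2 * a) * Real.sqrt (2 * b))
      ≤ Real.exp 1 ^ 2 / 2 * (a + b) := by
        rw [hE]; rw [hab] at *
        exact mul_le_mul_of_nonneg_left hab2 (by positivity)
    _ ≤ 2 * (Real.sqrt π * Real.sqrt 2) * (a + b) := by
        apply mul_le_mul_of_nonneg_right hkey (by positivity)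
    _ = 2 * Real.sqrt (a + b) * (Real.sqrt π * Real.sqrt (2 * (a + b))) := by
        rw [show 2 * Real.sqrt (a+b) * (Real.sqrt π * Real.sqrt (2*(a+b)))
            = 2 * Real.sqrt π * (Real.sqrt (a+b) * Real.sqrt (2*(a+b))) by ring, hrhs]
        ring

open Real Filter

lemma sqrt_pi_le_stirlingSeq (m : ℕ) (hm : 1 ≤ m) : Real.sqrt π ≤ Stirling.stirlingSeq m := by
  obtain ⟨i, rfl⟩ : ∃ i, m = i + 1 := ⟨m - 1, (Nat.succ_pred_eq_of_pos hm).symm⟩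
  exact Stirling.stirlingSeq'_antitone.le_of_tendsto
    (Stirling.tendsto_stirlingSeq_sqrt_pi.comp (Filter.tendsto_add_atTop_nat 1)) i

lemma stirlingSeq_le (m : ℕ) (hm : 1 ≤ m) :
    Stirling.stirlingSeq m ≤ Real.exp 1 / Real.sqrt 2 := by
  obtain ⟨i, rfl⟩ : ∃ i, m = i + 1 := ⟨m - 1, (Nat.succ_pred_eq_of_pos hm).symm⟩
  have := Stirling.stirlingSeq'_antitone (Nat.zero_le i)
  simpa [Stirling.stirlingSeq_one] using this

lemma fact_lb (m : ℕ) (hm : 1 ≤ m) :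
    Real.sqrt π * (Real.sqrt (2 * m) * ((m : ℝ) / Real.exp 1) ^ m) ≤ (m.factorial : ℝ) := by
  have h := sqrt_pi_le_stirlingSeq m hm
  have hD : 0 < Real.sqrt (2 * m) * ((m : ℝ) / Real.exp 1) ^ m := by
    have : (0:ℝ) < m := by exact_mod_cast hm
    positivity
  rw [Stirling.stirlingSeq, le_div_iff₀ hD] at h
  exact h

lemma fact_ub (m : ℕ) (hm : 1 ≤ m) :
    (m.factorial : ℝ) ≤ (Real.exp 1 / Real.sqrt 2) * (Real.sqrt (2 * m) * ((m : ℝ) / Real.exp 1) ^ m) := by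
  have h := stirlingSeq_le m hm
  have hD : 0 < Real.sqrt (2 * m) * ((m : ℝ) / Real.exp 1) ^ m := by
    have : (0:ℝ) < m := by exact_mod_cast hm
    positivity
  rw [Stirling.stirlingSeq, div_le_iff₀ hD] at h
  exact h

theorem stmt_6 (n j : ℕ) (hn : 2 ≤ n) (hj1 : 1 ≤ j) (hj2 : j ≤ n - 1) :
    (1 / (2 * Real.sqrt n)) * varphi ((j : ℝ) / n) ^ n ≤ (Nat.choose n j : ℝ) ∧
    (Nat.choose n j : ℝ) ≤ varphi ((j : ℝ) / n) ^ n := by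
  obtain ⟨k, hk1, rfl⟩ : ∃ k, 1 ≤ k ∧ n = j + k := ⟨n - j, by omega, by omega⟩
  have ha : (0:ℝ) < j := by exact_mod_cast hj1
  have hb : (0:ℝ) < k := by exact_mod_cast hk1
  have hcast : ((j + k : ℕ) : ℝ) = (j:ℝ) + k := by push_cast; ring
  rw [hcast, varphi_pow j k hj1 hk1]
  set a := (j:ℝ) with hadef
  set b := (k:ℝ) with hbdef
  have hs : (0:ℝ) < a + b := by linarith
  have hup : (Nat.choose (j + k) j : ℝ) * (a ^ j * b ^ k) ≤ (a + b) ^ (j + k) := by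
    rw [add_pow]
    have hmem : j ∈ Finset.range (j + k + 1) := by
      simp
    have := Finset.single_le_sum
      (f := fun i => a ^ i * b ^ (j + k - i) * ((j + k).choose i : ℝ))
      (fun i _ => by positivity) hmem
    simpa [Nat.add_sub_cancel_left, mul_comm, mul_assoc, mul_left_comm] using this
  have hCeq : (Nat.choose (j + k) j : ℝ) =
      ((j + k).factorial : ℝ) / ((j.factorial : ℝ) * (k.factorial : ℝ)) := by
    have h := Nat.choose_mul_factorial_mul_factorial (Nat.le_add_right j k)
    rw [Nat.add_sub_cancel_left] at h
    have h2 := congrArg (Nat.cast : ℕ → ℝ) h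
    push_cast at h2
    rw [eq_div_iff (by positivity), ← h2]
    ring
  constructor
  · -- lower bound
    rw [hCeq, le_div_iff₀ (by positivity)]
    set E := Real.exp 1 / Real.sqrt 2 with hEdef
    have hfj := fact_ub j hj1
    have hfk := fact_ub k hk1
    have hfn := fact_lb (j + k) (by omega)
    rw [hcast] at hfn
    have hE0 : 0 ≤ E := by
      rw [hEdef]; positivity
    have step1 : 1 / (2 * Real.sqrt (a + b)) * ((a + b) ^ (j + k) / (a ^ j * b ^ k)) *
        ((j.factorial : ℝ) * (k.factorial : ℝ)) ≤
        1 / (2 * Real.sqrt (a + b)) * ((a + b) ^ (j + k) / (a ^ j * b ^ k)) *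
        ((E * (Real.sqrt (2 * a) * (a / Real.exp 1) ^ j)) *
         (E * (Real.sqrt (2 * b) * (b / Real.exp 1) ^ k))) := by
      apply mul_le_mul_of_nonneg_left _ (by positivity)
      exact mul_le_mul hfj hfk (by positivity) (by positivity)
    have step2 : 1 / (2 * Real.sqrt (a + b)) * ((a + b) ^ (j + k) / (a ^ j * b ^ k)) *
        ((E * (Real.sqrt (2 * a) * (a / Real.exp 1) ^ j)) *
         (E * (Real.sqrt (2 * b) * (b / Real.exp 1) ^ k))) ≤
        Real.sqrt π * (Real.sqrt (2 * (a + b)) * ((a + b) / Real.exp 1) ^ (j + k)) := by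
      have he : (0:ℝ) < Real.exp 1 := Real.exp_pos 1
      have hsq : (0:ℝ) < Real.sqrt (a + b) := Real.sqrt_pos.mpr hs
      have key := scalar_ineq a b ha hb
      have hQ : (0:ℝ) ≤ (a + b) ^ (j + k) / (Real.exp 1 ^ (j + k) * (2 * Real.sqrt (a + b))) := by
        positivity
      have hmul := mul_le_mul_of_nonneg_right key hQ
      calc 1 / (2 * Real.sqrt (a + b)) * ((a + b) ^ (j + k) / (a ^ j * b ^ k)) *
          ((E * (Real.sqrt (2 * a) * (a / Real.exp 1) ^ j)) *
           (E * (Real.sqrt (2 * b) * (b / Real.exp 1) ^ k)))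
          = E ^ 2 * (Real.sqrt (2 * a) * Real.sqrt (2 * b)) *
            ((a + b) ^ (j + k) / (Real.exp 1 ^ (j + k) * (2 * Real.sqrt (a + b)))) := by
            rw [div_pow, div_pow]
            field_simp
            ring
        _ ≤ 2 * Real.sqrt (a + b) * (Real.sqrt π * Real.sqrt (2 * (a + b))) *
            ((a + b) ^ (j + k) / (Real.exp 1 ^ (j + k) * (2 * Real.sqrt (a + b)))) := hmul
        _ = Real.sqrt π * (Real.sqrt (2 * (a + b)) * ((a + b) / Real.exp 1) ^ (j + k)) := by
            rw [div_pow]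
            field_simp
    exact le_trans (le_trans step1 step2) hfn
  · -- upper bound
    rw [le_div_iff₀ (by positivity)]
    exact hup
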